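/- arXiv:1505.00398 — 3 statements merged into one kernel-verified Lean document; each statement's English description precedes it below -/
import Mathlib

section
/- Let f : ℝ^d → ℝ be Lipschitz continuous with Lipschitz constant κ (with respect to the Euclidean norm), let x_1, …, x_n ∈ ℝ^d, and define the kernel matrix K ∈ ℝ^{n×n} by K_{p,q} = f(x_p − x_q). Let C_i ⊆ {1,…,n} be a cluster of radius at most R, i.e., there exists c ∈ ℝ^d with ‖x_p − c‖_2 ≤ R for all p ∈ C_i. Then for every positive integer r, the best rank-r approximation error of the row-submatrix K(C_i,:) (the |C_i| × n matrix with rows indexed by C_i) in the Frobenius norm satisfies: there exists a matrix A ∈ ℝ^{|C_i| × n} of rank at most r with ‖K(C_i,:) − A‖_F ≤ 4 κ r^{−1/d} √(|C_i| · n) · R (equivalently, the infimum of ‖K(C_i,:) − A‖_F over matrices A of rank at most r is bounded by 4 κ r^{−1/d} √(|C_i| · n) · R). -/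
open scoped NNReal
open scoped ENNReal

open Metric MeasureTheory in
/-- A ball of radius `R` in `ℝ^d` can be covered by `N` closed balls of radius `δ`,
provided `(1 + 2R/δ)^d ≤ N`. (Proved via a volume/packing argument.) -/
lemma bbf_ball_covering {d : ℕ} (c : EuclideanSpace ℝ (Fin d)) {R δ : ℝ}
    (hR : 0 ≤ R) (hδ : 0 < δ) (N : ℕ) (hN : (1 + 2 * R / δ) ^ d ≤ (N : ℝ)) :
    ∃ s : Finset (EuclideanSpace ℝ (Fin d)), s.card ≤ N ∧
      closedBall c R ⊆ ⋃ t ∈ s, closedBall t δ := by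
  classical
  set Sep : Finset (EuclideanSpace ℝ (Fin d)) → Prop := fun T =>
    (↑T ⊆ closedBall c R) ∧ ∀ a ∈ T, ∀ b ∈ T, a ≠ b → δ < dist a b with hSep
  -- volume bound on separated sets
  have hbound : ∀ T, Sep T → T.card ≤ N := by
    intro T hT
    have hdisj : (↑T : Set (EuclideanSpace ℝ (Fin d))).PairwiseDisjoint
        (fun t => ball t (δ / 2)) := by
      intro a ha b hb hab
      apply ball_disjoint_ball
      have := hT.2 a ha b hb hab
      linarith
    have hvol : (T.card : ℝ≥0∞) * volume (ball (0 : EuclideanSpace ℝ (Fin d)) (δ / 2)) ≤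
        volume (ball (0 : EuclideanSpace ℝ (Fin d)) (R + δ / 2)) := by
      calc (T.card : ℝ≥0∞) * volume (ball (0 : EuclideanSpace ℝ (Fin d)) (δ / 2))
          = ∑ t ∈ T, volume (ball t (δ / 2)) := by
            simp only [fun t => Measure.addHaar_ball_center volume t (δ / 2),
              Finset.sum_const, nsmul_eq_mul]
        _ = volume (⋃ t ∈ T, ball t (δ / 2)) :=
            (measure_biUnion_finset hdisj (fun t _ => measurableSet_ball)).symm
        _ ≤ volume (ball c (R + δ / 2)) := by
            apply measure_mono
            intro y hy
            simp only [Set.mem_iUnion] at hy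
            obtain ⟨t, ht, hyt⟩ := hy
            have h1 : dist y t < δ / 2 := mem_ball.1 hyt
            have h2 : dist t c ≤ R := hT.1 ht
            have := dist_triangle y t c
            exact mem_ball.2 (by linarith)
        _ = volume (ball (0 : EuclideanSpace ℝ (Fin d)) (R + δ / 2)) :=
            Measure.addHaar_ball_center volume c (R + δ / 2)
    rw [Measure.addHaar_ball_of_pos _ _ (by linarith : (0:ℝ) < δ / 2),
        Measure.addHaar_ball_of_pos _ _ (by linarith : (0:ℝ) < R + δ / 2), ← mul_assoc] at hvol
    have hvpos : volume (ball (0 : EuclideanSpace ℝ (Fin d)) 1) ≠ 0 :=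
      (measure_ball_pos _ _ one_pos).ne'
    have hvne : volume (ball (0 : EuclideanSpace ℝ (Fin d)) 1) ≠ ⊤ :=
      measure_ball_lt_top.ne
    have hvol2 := (ENNReal.mul_le_mul_iff_left hvpos hvne).1 hvol
    have hd2 : (0:ℝ) < (δ / 2) ^ Module.finrank ℝ (EuclideanSpace ℝ (Fin d)) := by positivity
    have hvol3 : (T.card : ℝ) * (δ / 2) ^ Module.finrank ℝ (EuclideanSpace ℝ (Fin d)) ≤
        (R + δ / 2) ^ Module.finrank ℝ (EuclideanSpace ℝ (Fin d)) := by
      have h := ENNReal.toReal_mono ENNReal.ofReal_ne_top hvol2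
      rwa [ENNReal.toReal_mul, ENNReal.toReal_natCast, ENNReal.toReal_ofReal hd2.le,
        ENNReal.toReal_ofReal (by positivity)] at h
    rw [finrank_euclideanSpace_fin] at hvol3
    have key : (T.card : ℝ) ≤ (N : ℝ) := by
      have h1 : (T.card : ℝ) ≤ ((R + δ / 2) / (δ / 2)) ^ d := by
        rw [div_pow, le_div_iff₀ (by positivity)]
        exact hvol3
      have h2 : (R + δ / 2) / (δ / 2) = 1 + 2 * R / δ := by
        field_simp; ring
      rw [h2] at h1
      exact h1.trans hN
    exact_mod_cast key
  -- a maximal separated set is a covering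
  set Q : Set ℕ := {k | ∃ T, Sep T ∧ T.card = k} with hQ
  have hQne : Q.Nonempty := ⟨0, ∅, ⟨by simp, by simp⟩, rfl⟩
  have hQbdd : BddAbove Q :=
    ⟨N, fun k ⟨T, hT, hk⟩ => hk ▸ hbound T hT⟩
  obtain ⟨T, hT, hTcard⟩ := Nat.sSup_mem hQne hQbdd
  refine ⟨T, hbound T hT, ?_⟩
  intro z hz
  by_contra hcon
  simp only [Set.mem_iUnion, mem_closedBall, not_exists, not_le] at hcon
  have hzT : z ∉ T := fun hzT => absurd (hcon z hzT) (by simp [hδ.le, not_lt])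
  have hsep' : Sep (insert z T) := by
    constructor
    · intro a ha
      simp only [Finset.coe_insert, Set.mem_insert_iff] at ha
      rcases ha with rfl | ha
      · exact hz
      · exact hT.1 ha
    · intro a ha b hb hab
      simp only [Finset.mem_insert] at ha hb
      rcases ha with rfl | ha <;> rcases hb with rfl | hb
      · exact absurd rfl hab
      · exact hcon b hb
      · rw [dist_comm]; exact hcon a ha
      · exact hT.2 a ha b hb hab
  have : (insert z T).card ∈ Q := ⟨_, hsep', rfl⟩
  have hle := le_csSup hQbdd this
  rw [Finset.card_insert_of_notMem hzT, hTcard] at hle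
  omega

/-- Frobenius norm of a real matrix. -/
noncomputable def frobNorm {m n : Type*} [Fintype m] [Fintype n]
    (M : Matrix m n ℝ) : ℝ :=
  Real.sqrt (∑ i, ∑ j, (M i j) ^ 2)

lemma bbf_frobNorm_le_of_entries {m n : Type*} [Fintype m] [Fintype n]
    (M : Matrix m n ℝ) (b : ℝ) (hb : 0 ≤ b) (h : ∀ p q, |M p q| ≤ b) :
    frobNorm M ≤ Real.sqrt (Fintype.card m * Fintype.card n) * b := by
  have hsum : ∑ p, ∑ q, (M p q) ^ 2 ≤ (Fintype.card m * Fintype.card n : ℝ) * b ^ 2 := by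
    calc ∑ p, ∑ q, (M p q) ^ 2 ≤ ∑ _p : m, ∑ _q : n, b ^ 2 := by
          apply Finset.sum_le_sum; intro p _; apply Finset.sum_le_sum; intro q _
          rw [← sq_abs]
          exact pow_le_pow_left₀ (abs_nonneg _) (h p q) 2
      _ = (Fintype.card m * Fintype.card n : ℝ) * b ^ 2 := by
          simp [Finset.sum_const, nsmul_eq_mul]; ring
  calc frobNorm M ≤ Real.sqrt ((Fintype.card m * Fintype.card n : ℝ) * b ^ 2) :=
        Real.sqrt_le_sqrt hsum
    _ = Real.sqrt (Fintype.card m * Fintype.card n) * b := by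
        rw [Real.sqrt_mul (by positivity), Real.sqrt_sq hb]

/-- If every point of the cluster is within `ε` of one of at most `r` centers, then the
row-submatrix admits a rank-`≤ r` approximation with entrywise error `κ·ε`. -/
lemma bbf_key_approx {d n : ℕ} (κ : ℝ≥0) (f : EuclideanSpace ℝ (Fin d) → ℝ)
    (hf : LipschitzWith κ f)
    (x : Fin n → EuclideanSpace ℝ (Fin d))
    (K : Matrix (Fin n) (Fin n) ℝ)
    (hK : ∀ p q, K p q = f (x p - x q))
    (C : Finset (Fin n)) (r : ℕ)
    (s : Finset (EuclideanSpace ℝ (Fin d))) (hcard : s.card ≤ r)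
    (g : {p // p ∈ C} → EuclideanSpace ℝ (Fin d)) (hg : ∀ p, g p ∈ s)
    (ε : ℝ) (hε : 0 ≤ ε) (hgε : ∀ p, ‖x p.1 - g p‖ ≤ ε) :
    ∃ A : Matrix {p // p ∈ C} (Fin n) ℝ,
      A.rank ≤ r ∧
      frobNorm (K.submatrix (fun p : {p // p ∈ C} => p.1) id - A) ≤
        Real.sqrt (C.card * n) * ((κ : ℝ) * ε) := by
  classical
  set B : Matrix {p // p ∈ C} {t // t ∈ s} ℝ :=
    fun p t => if g p = (t : EuclideanSpace ℝ (Fin d)) then 1 else 0 with hB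
  set D : Matrix {t // t ∈ s} (Fin n) ℝ :=
    fun t q => f ((t : EuclideanSpace ℝ (Fin d)) - x q) with hD
  refine ⟨B * D, ?_, ?_⟩
  · calc (B * D).rank ≤ D.rank := Matrix.rank_mul_le_right B D
      _ ≤ Fintype.card {t // t ∈ s} := D.rank_le_card_height
      _ = s.card := Fintype.card_coe s
      _ ≤ r := hcard
  · have hA : ∀ p q, (B * D) p q = f (g p - x q) := by
      intro p q
      rw [Matrix.mul_apply]
      rw [Finset.sum_eq_single (⟨g p, hg p⟩ : {t // t ∈ s})]
      · simp [hB, hD]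
      · intro b _ hb
        rw [hB]
        simp only
        rw [if_neg, zero_mul]
        intro h
        exact hb (Subtype.ext h.symm)
      · intro h; exact absurd (Finset.mem_univ _) h
    have hle := bbf_frobNorm_le_of_entries
      (K.submatrix (fun p : {p // p ∈ C} => p.1) id - (B * D))
      ((κ : ℝ) * ε) (by positivity) ?_
    · refine hle.trans_eq ?_
      congr 2
      simp [Fintype.card_coe]
    · intro p q
      rw [Matrix.sub_apply, Matrix.submatrix_apply, id, hK, hA]
      have h1 : dist (f (x p.1 - x q)) (f (g p - x q)) ≤
          (κ : ℝ) * dist (x p.1 - x q) (g p - x q) := hf.dist_le_mul _ _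
      rw [Real.dist_eq] at h1
      refine h1.trans ?_
      rw [dist_eq_norm, sub_sub_sub_cancel_right]
      exact mul_le_mul_of_nonneg_left (hgε p) (by positivity)

/-- Low-rank approximation of the row-submatrix `K(C,:)` of a shift-invariant
kernel matrix, for a cluster `C` of radius at most `R`. -/
theorem bbf_row_submatrix_low_rank_approx
    (d n : ℕ) (κ : ℝ≥0) (f : EuclideanSpace ℝ (Fin d) → ℝ)
    (hf : LipschitzWith κ f)
    (x : Fin n → EuclideanSpace ℝ (Fin d))
    (K : Matrix (Fin n) (Fin n) ℝ)
    (hK : ∀ p q, K p q = f (x p - x q))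
    (C : Finset (Fin n)) (R : ℝ) (c : EuclideanSpace ℝ (Fin d))
    (hC : ∀ p ∈ C, ‖x p - c‖ ≤ R)
    (r : ℕ) (hr : 0 < r) :
    ∃ A : Matrix {p // p ∈ C} (Fin n) ℝ,
      A.rank ≤ r ∧
      frobNorm (K.submatrix (fun p : {p // p ∈ C} => p.1) id - A) ≤
        4 * (κ : ℝ) * (r : ℝ) ^ (-(1 : ℝ) / d) * Real.sqrt (C.card * n) * R := by
  classical
  rcases C.eq_empty_or_nonempty with rfl | hCne
  · -- empty cluster: everything is zero
    obtain ⟨A, hrank, hfrob⟩ := bbf_key_approx κ f hf x K hK ∅ r {c} (by simpa using (show 1 ≤ r from hr))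
      (fun p => c) (fun p => Finset.mem_singleton_self c) 0 le_rfl
      (fun p => (Finset.notMem_empty _ p.2).elim)
    refine ⟨A, hrank, ?_⟩
    calc frobNorm _ ≤ Real.sqrt ((Finset.card ∅ : ℝ) * n) * ((κ : ℝ) * 0) := hfrob
      _ = 4 * (κ : ℝ) * (r : ℝ) ^ (-(1 : ℝ) / d) * Real.sqrt ((Finset.card ∅ : ℝ) * n) * R := by
          simp
  · obtain ⟨p₀, hp₀⟩ := hCne
    have hR : 0 ≤ R := le_trans (norm_nonneg _) (hC p₀ hp₀)
    have hrpow : (0:ℝ) ≤ (r : ℝ) ^ (-(1 : ℝ) / d) := Real.rpow_nonneg (by positivity) _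
    -- reduce to bounding `κ·ε`
    have main : ∀ ε : ℝ, 0 ≤ ε →
        (κ : ℝ) * ε ≤ 4 * (κ : ℝ) * (r : ℝ) ^ (-(1 : ℝ) / d) * R →
        (∃ s : Finset (EuclideanSpace ℝ (Fin d)), s.card ≤ r ∧
          ∃ g : {p // p ∈ C} → EuclideanSpace ℝ (Fin d),
            (∀ p, g p ∈ s) ∧ ∀ p, ‖x p.1 - g p‖ ≤ ε) →
        ∃ A : Matrix {p // p ∈ C} (Fin n) ℝ,
          A.rank ≤ r ∧
          frobNorm (K.submatrix (fun p : {p // p ∈ C} => p.1) id - A) ≤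
            4 * (κ : ℝ) * (r : ℝ) ^ (-(1 : ℝ) / d) * Real.sqrt (C.card * n) * R := by
      intro ε hε hκε ⟨s, hcards, g, hg, hgε⟩
      obtain ⟨A, hrank, hfrob⟩ := bbf_key_approx κ f hf x K hK C r s hcards g hg ε hε hgε
      refine ⟨A, hrank, hfrob.trans ?_⟩
      calc Real.sqrt (C.card * n) * ((κ : ℝ) * ε)
          ≤ Real.sqrt (C.card * n) * (4 * (κ : ℝ) * (r : ℝ) ^ (-(1 : ℝ) / d) * R) :=
            mul_le_mul_of_nonneg_left hκε (Real.sqrt_nonneg _)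
        _ = 4 * (κ : ℝ) * (r : ℝ) ^ (-(1 : ℝ) / d) * Real.sqrt (C.card * n) * R := by ring
    rcases Nat.eq_zero_or_pos d with rfl | hd
    · -- d = 0 : the space is a single point
      refine main 0 le_rfl ?_ ⟨{c}, by simpa using (show 1 ≤ r from hr), fun _ => c,
        fun p => Finset.mem_singleton_self c, fun p => ?_⟩
      · rw [mul_zero]
        exact mul_nonneg (mul_nonneg (by positivity) hrpow) hR
      · have hxc : x p.1 = c := Subsingleton.elim _ _
        simp [hxc]
    · -- d ≥ 1
      set u : ℝ := (r : ℝ) ^ ((1 : ℝ) / d) with hu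
      have hr1 : (1:ℝ) ≤ (r:ℝ) := by exact_mod_cast hr
      have hu1 : (1:ℝ) ≤ u := Real.one_le_rpow hr1 (by positivity)
      have hu0 : (0:ℝ) < u := lt_of_lt_of_le one_pos hu1
      have hinv : (r : ℝ) ^ (-(1 : ℝ) / d) = u⁻¹ := by
        rw [neg_div, Real.rpow_neg (by positivity), hu]
      have hud : u ^ d = (r : ℝ) := by
        rw [hu, ← Real.rpow_natCast ((r:ℝ) ^ ((1:ℝ)/d)) d, ← Real.rpow_mul (by positivity)]
        rw [one_div, inv_mul_cancel₀ (by exact_mod_cast hd.ne' : (d:ℝ) ≠ 0), Real.rpow_one]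
      by_cases hbig : 3 ≤ u ∧ 0 < R
      · -- covering case
        obtain ⟨hu3, hR0⟩ := hbig
        set δ : ℝ := 3 * R * u⁻¹ with hδdef
        have hδ : 0 < δ := by positivity
        have hNbound : (1 + 2 * R / δ) ^ d ≤ (r : ℝ) := by
          have hle : 1 + 2 * R / δ ≤ u := by
            have h2 : 2 * R / δ = 2 / 3 * u := by
              rw [hδdef]
              field_simp
            rw [h2]
            linarith
          calc (1 + 2 * R / δ) ^ d ≤ u ^ d := by
                apply pow_le_pow_left₀ _ hle
                positivity
            _ = (r : ℝ) := hud
        obtain ⟨s, hcards, hcover⟩ := bbf_ball_covering c hR hδ r hNbound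
        · have hsel : ∀ p : {p // p ∈ C}, ∃ t, t ∈ s ∧ ‖x p.1 - t‖ ≤ δ := by
            intro p
            have hmem : x p.1 ∈ Metric.closedBall c R := by
              rw [Metric.mem_closedBall, dist_eq_norm]; exact hC p.1 p.2
            have := hcover hmem
            simp only [Set.mem_iUnion, Metric.mem_closedBall] at this
            obtain ⟨t, ht, hdt⟩ := this
            exact ⟨t, ht, by rwa [← dist_eq_norm]⟩
          choose g hg1 hg2 using hsel
          refine main δ hδ.le ?_ ⟨s, hcards, g, hg1, hg2⟩
          rw [hinv, hδdef]
          have h0 : 0 ≤ (κ:ℝ) * R * u⁻¹ := by positivity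
          nlinarith
      · -- small-rank case: a single center suffices
        refine main R hR ?_ ⟨{c}, by simpa using (show 1 ≤ r from hr), fun p => c,
          fun p => Finset.mem_singleton_self c, fun p => hC p.1 p.2⟩
        rw [hinv]
        rcases not_and_or.mp hbig with hu3 | hR0
        · push_neg at hu3
          have huu : u⁻¹ * u = 1 := inv_mul_cancel₀ hu0.ne'
          have h1 : (1:ℝ) ≤ 4 * u⁻¹ := by
            have h2 : (4:ℝ) * u⁻¹ - 1 = u⁻¹ * (4 - u) := by
              field_simp
            have h3 : (0:ℝ) ≤ u⁻¹ * (4 - u) := by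
              apply mul_nonneg (by positivity); linarith
            linarith
          calc (κ : ℝ) * R = 1 * ((κ : ℝ) * R) := (one_mul _).symm
            _ ≤ (4 * u⁻¹) * ((κ : ℝ) * R) :=
                mul_le_mul_of_nonneg_right h1 (by positivity)
            _ = 4 * (κ : ℝ) * u⁻¹ * R := by ring
        · push_neg at hR0
          have : R = 0 := le_antisymm hR0 hR
          simp [this]
end

section
/- Let f : ℝ^d → ℝ be Lipschitz continuous with Lipschitz constant κ (with respect to the Euclidean norm), let x_1, …, x_n ∈ ℝ^d, and define the kernel matrix K ∈ ℝ^{n×n} by K_{p,q} = f(x_p − x_q). Let C_i ⊆ {1,…,n} be a cluster of radius at most R, i.e., there exists c ∈ ℝ^d with ‖x_p − c‖_2 ≤ R for all p ∈ C_i. Then for every positive integer r, there exists a matrix A ∈ ℝ^{n × |C_i|} of rank at most r with ‖K(:,C_i) − A‖_F ≤ 4 κ r^{−1/d} √(|C_i| · n) · R, where K(:,C_i) is the n × |C_i| submatrix of K consisting of the columns indexed by C_i. -/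
open scoped NNReal

open Metric MeasureTheory in
lemma bbf_packing_aux (d : ℕ) (hd : 0 < d) (T : Finset (EuclideanSpace ℝ (Fin d)))
    (c : EuclideanSpace ℝ (Fin d)) (R ε : ℝ) (hε : 0 < ε) (hR : 0 ≤ R)
    (hT : ∀ u ∈ T, dist u c ≤ R)
    (hsep : ∀ a ∈ T, ∀ b ∈ T, a ≠ b → ε ≤ dist a b) :
    (T.card : ℝ) * (ε / 2) ^ d ≤ (R + ε / 2) ^ d := by
  classical
  haveI : Nontrivial (EuclideanSpace ℝ (Fin d)) := by
    apply Module.nontrivial_of_finrank_pos (R := ℝ)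
    rw [finrank_euclideanSpace_fin]; exact hd
  have hhalf : (0 : ℝ) < ε / 2 := by linarith
  set vB := volume (ball (0 : EuclideanSpace ℝ (Fin d)) 1) with hvB
  have hball : ∀ (y : EuclideanSpace ℝ (Fin d)) (ρ : ℝ), 0 ≤ ρ →
      volume (ball y ρ) = ENNReal.ofReal (ρ ^ d) * vB := by
    intro y ρ hρ
    rw [hvB, Measure.addHaar_ball volume y hρ, finrank_euclideanSpace_fin]
  have hdisj : (T : Set (EuclideanSpace ℝ (Fin d))).PairwiseDisjoint
      (fun u => ball u (ε / 2)) := by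
    intro a ha b hb hab
    exact ball_disjoint_ball (by
      have := hsep a (by simpa using ha) b (by simpa using hb) hab
      linarith)
  have hmeas := measure_biUnion_finset (μ := volume) hdisj (fun u _ => measurableSet_ball)
  have hsub : (⋃ u ∈ T, ball u (ε / 2)) ⊆ ball c (R + ε / 2) := by
    intro y hy
    simp only [Set.mem_iUnion] at hy
    obtain ⟨u, hu, hyu⟩ := hy
    have h1 : dist y u < ε / 2 := mem_ball.mp hyu
    have h2 := hT u hu
    refine mem_ball.mpr ?_
    calc dist y c ≤ dist y u + dist u c := dist_triangle _ _ _
      _ < R + ε / 2 := by linarith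
  have key : (T.card : ENNReal) * (ENNReal.ofReal ((ε / 2) ^ d) * vB) ≤
      ENNReal.ofReal ((R + ε / 2) ^ d) * vB := by
    calc (T.card : ENNReal) * (ENNReal.ofReal ((ε / 2) ^ d) * vB)
        = ∑ u ∈ T, volume (ball u (ε / 2)) := by
          rw [Finset.sum_congr rfl (fun u _ => hball u (ε / 2) hhalf.le)]
          simp [Finset.sum_const, nsmul_eq_mul]
      _ = volume (⋃ u ∈ T, ball u (ε / 2)) := hmeas.symm
      _ ≤ volume (ball c (R + ε / 2)) := measure_mono hsub
      _ = ENNReal.ofReal ((R + ε / 2) ^ d) * vB := hball c _ (by linarith)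
  have hvB0 : vB ≠ 0 := (measure_ball_pos volume _ one_pos).ne'
  have hvBt : vB ≠ ⊤ := measure_ball_lt_top.ne
  rw [← mul_assoc, ENNReal.mul_le_mul_iff_left hvB0 hvBt] at key
  have : ENNReal.ofReal ((T.card : ℝ) * (ε / 2) ^ d) ≤
      ENNReal.ofReal ((R + ε / 2) ^ d) := by
    rwa [ENNReal.ofReal_mul (by positivity), ENNReal.ofReal_natCast]
  rwa [ENNReal.ofReal_le_ofReal_iff (by positivity)] at this

lemma bbf_exists_net {E : Type*} [MetricSpace E] (S : Finset E) (ε : ℝ) (hε : 0 < ε) :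
    ∃ T ⊆ S, (∀ a ∈ T, ∀ b ∈ T, a ≠ b → ε ≤ dist a b) ∧
      ∀ s ∈ S, ∃ u ∈ T, dist s u ≤ ε := by
  classical
  obtain ⟨T, hTP, hmax⟩ := Finset.exists_max_image
    (S.powerset.filter (fun T => ∀ a ∈ T, ∀ b ∈ T, a ≠ b → ε ≤ dist a b))
    Finset.card ⟨∅, by simp⟩
  simp only [Finset.mem_filter, Finset.mem_powerset] at hTP
  refine ⟨T, hTP.1, hTP.2, ?_⟩
  intro s hs
  by_contra h
  push_neg at h
  have hfar : ∀ u ∈ T, ε < dist s u := fun u hu => h u hu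
  have hsT : s ∉ T := fun hsT => by
    have := hfar s hsT; simp at this; linarith
  have hins : insert s T ∈ (S.powerset.filter
      (fun T => ∀ a ∈ T, ∀ b ∈ T, a ≠ b → ε ≤ dist a b)) := by
    refine Finset.mem_filter.mpr ⟨Finset.mem_powerset.mpr ?_, ?_⟩
    · exact Finset.insert_subset hs hTP.1
    · intro a ha b hb hab
      rcases Finset.mem_insert.mp ha with rfl | ha'
      · rcases Finset.mem_insert.mp hb with rfl | hb'
        · exact absurd rfl hab
        · exact (hfar b hb').le
      · rcases Finset.mem_insert.mp hb with rfl | hb'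
        · rw [dist_comm]; exact (hfar a ha').le
        · exact hTP.2 a ha' b hb' hab
  have := hmax _ hins
  rw [Finset.card_insert_of_notMem hsT] at this
  omega

/-- Low-rank approximation of the column-submatrix `K(:,C)` of a shift-invariant
kernel matrix, for a cluster `C` of radius at most `R`. -/
theorem bbf_column_submatrix_low_rank_approx
    (d n : ℕ) (κ : ℝ≥0) (f : EuclideanSpace ℝ (Fin d) → ℝ)
    (hf : LipschitzWith κ f)
    (x : Fin n → EuclideanSpace ℝ (Fin d))
    (K : Matrix (Fin n) (Fin n) ℝ)
    (hK : ∀ p q, K p q = f (x p - x q))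
    (C : Finset (Fin n)) (R : ℝ) (c : EuclideanSpace ℝ (Fin d))
    (hC : ∀ p ∈ C, ‖x p - c‖ ≤ R)
    (r : ℕ) (hr : 0 < r) :
    ∃ A : Matrix (Fin n) {p // p ∈ C} ℝ,
      A.rank ≤ r ∧
      frobNorm (K.submatrix id (fun q : {p // p ∈ C} => q.1) - A) ≤
        4 * (κ : ℝ) * (r : ℝ) ^ (-(1 : ℝ) / d) * Real.sqrt (C.card * n) * R := by
  classical
  set t : ℝ := (r : ℝ) ^ (-(1 : ℝ) / d) with ht
  have hrpos : (0 : ℝ) < r := by exact_mod_cast hr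
  have htpos : 0 < t := Real.rpow_pos_of_pos hrpos _
  rcases C.eq_empty_or_nonempty with hCe | hCne
  · haveI : IsEmpty {p // p ∈ C} :=
      ⟨fun q => Finset.eq_empty_iff_forall_notMem.mp hCe q.1 q.2⟩
    refine ⟨0, ?_, ?_⟩
    · calc (0 : Matrix (Fin n) {p // p ∈ C} ℝ).rank
          ≤ Fintype.card {p // p ∈ C} := Matrix.rank_le_card_width _
        _ = 0 := Fintype.card_eq_zero
        _ ≤ r := Nat.zero_le r
    · have h1 : frobNorm (K.submatrix id (fun q : {p // p ∈ C} => q.1) - 0) = 0 := by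
        simp [frobNorm]
      rw [h1, hCe]
      simp
  · obtain ⟨q₀, hq₀⟩ := hCne
    have hR : 0 ≤ R := le_trans (norm_nonneg _) (hC q₀ hq₀)
    -- get a finite set of centers
    have hcenters : ∃ T : Finset (EuclideanSpace ℝ (Fin d)), T.card ≤ r ∧
        ∀ q ∈ C, ∃ u ∈ T, ‖x q - u‖ ≤ 4 * t * R := by
      by_cases hcase : 1 ≤ 4 * t
      · refine ⟨{c}, by simp; omega, fun q hq => ⟨c, Finset.mem_singleton_self c, ?_⟩⟩
        have := hC q hq
        nlinarith
      · push_neg at hcase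
        have hd : 0 < d := by
          by_contra hd0
          have hd0' : d = 0 := by omega
          have : t = 1 := by
            rw [ht, hd0']
            norm_num
          linarith
        rcases eq_or_lt_of_le hR with hR0 | hRpos
        · refine ⟨{c}, by simp; omega, fun q hq => ⟨c, Finset.mem_singleton_self c, ?_⟩⟩
          have := hC q hq
          nlinarith
        · set ε : ℝ := 4 * t * R with hε
          have hεpos : 0 < ε := by positivity
          obtain ⟨T, hTS, hsep, hnet⟩ := bbf_exists_net (C.image x) ε hεpos
          have hTc : ∀ u ∈ T, dist u c ≤ R := by
            intro u hu
            obtain ⟨q, hq, rfl⟩ := Finset.mem_image.mp (hTS hu)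
            rw [dist_eq_norm]; exact hC q hq
          have hpack := bbf_packing_aux d hd T c R ε hεpos hR hTc hsep
          -- card bound
          set s : ℝ := (r : ℝ) ^ ((1 : ℝ) / d) with hsdef
          have hspos : 0 < s := Real.rpow_pos_of_pos hrpos _
          have hts : t = s⁻¹ := by
            rw [ht, hsdef, neg_div, Real.rpow_neg hrpos.le]
          have hs4 : 4 < s := by
            rw [hts] at hcase
            have h4 : (4 : ℝ) / s < 1 := by rw [div_eq_mul_inv]; exact hcase
            exact (div_lt_one hspos).mp h4
          have hsd : s ^ d = (r : ℝ) := by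
            rw [hsdef, ← Real.rpow_natCast ((r : ℝ) ^ ((1 : ℝ) / d)) d,
              ← Real.rpow_mul hrpos.le, one_div,
              inv_mul_cancel₀ (by exact_mod_cast hd.ne'), Real.rpow_one]
          have hεhalf : ε / 2 = 2 * R / s := by
            rw [hε, hts]; field_simp; ring
          have hkey : R + ε / 2 ≤ (ε / 2) * s := by
            rw [hεhalf, div_mul_cancel₀ _ hspos.ne']
            have h2s : 2 * R / s ≤ R := by
              rw [div_le_iff₀ hspos]
              nlinarith
            linarith
          have hcard : (T.card : ℝ) ≤ (r : ℝ) := by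
            have h1 : (T.card : ℝ) * (ε / 2) ^ d ≤ ((ε / 2) * s) ^ d :=
              le_trans hpack (pow_le_pow_left₀ (by positivity) hkey d)
            rw [mul_pow, hsd] at h1
            have h2 : (0 : ℝ) < (ε / 2) ^ d := by positivity
            nlinarith
          exact ⟨T, by exact_mod_cast hcard, fun q hq => by
            obtain ⟨u, hu, hdu⟩ := hnet (x q) (Finset.mem_image_of_mem x hq)
            exact ⟨u, hu, by rwa [← dist_eq_norm]⟩⟩
    obtain ⟨T, hTr, hassign⟩ := hcenters
    have hsel : ∀ q : {p // p ∈ C}, ∃ u : {v // v ∈ T}, ‖x q.1 - u.1‖ ≤ 4 * t * R := by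
      intro q
      obtain ⟨u, hu, h⟩ := hassign q.1 q.2
      exact ⟨⟨u, hu⟩, h⟩
    choose σ hσ using hsel
    set B : Matrix (Fin n) {v // v ∈ T} ℝ := fun p u => f (x p - u.1) with hB
    set P : Matrix {v // v ∈ T} {p // p ∈ C} ℝ := fun u q => if σ q = u then 1 else 0 with hP
    refine ⟨B * P, ?_, ?_⟩
    · calc (B * P).rank ≤ B.rank := Matrix.rank_mul_le_left B P
        _ ≤ Fintype.card {v // v ∈ T} := Matrix.rank_le_card_width B
        _ = T.card := Fintype.card_coe T
        _ ≤ r := hTr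
    · have hBP : ∀ (p : Fin n) (q : {p // p ∈ C}), (B * P) p q = f (x p - (σ q).1) := by
        intro p q
        rw [Matrix.mul_apply]
        rw [Finset.sum_eq_single (σ q)]
        · simp [hB, hP]
        · intro u _ hu
          simp [hP, Ne.symm hu]
        · intro h
          exact absurd (Finset.mem_univ _) h
      set b : ℝ := (κ : ℝ) * (4 * t * R) with hb
      have hbnn : 0 ≤ b := by positivity
      have hentry : ∀ (p : Fin n) (q : {p // p ∈ C}),
          |(K.submatrix id (fun q : {p // p ∈ C} => q.1) - B * P) p q| ≤ b := by
        intro p q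
        rw [Matrix.sub_apply, Matrix.submatrix_apply, id_eq, hBP, hK]
        calc |f (x p - x q.1) - f (x p - (σ q).1)|
            = dist (f (x p - x q.1)) (f (x p - (σ q).1)) := (Real.dist_eq _ _).symm
          _ ≤ (κ : ℝ) * dist (x p - x q.1) (x p - (σ q).1) := hf.dist_le_mul _ _
          _ = (κ : ℝ) * ‖x q.1 - (σ q).1‖ := by
              rw [dist_eq_norm]
              congr 1
              rw [← norm_neg]
              congr 1
              abel
          _ ≤ b := by
              rw [hb]
              exact mul_le_mul_of_nonneg_left (hσ q) κ.coe_nonneg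
      have hsum : ∑ p : Fin n, ∑ q : {p // p ∈ C},
          ((K.submatrix id (fun q : {p // p ∈ C} => q.1) - B * P) p q) ^ 2
          ≤ (n : ℝ) * ((C.card : ℝ) * b ^ 2) := by
        calc ∑ p : Fin n, ∑ q : {p // p ∈ C},
            ((K.submatrix id (fun q : {p // p ∈ C} => q.1) - B * P) p q) ^ 2
            ≤ ∑ _p : Fin n, ∑ _q : {p // p ∈ C}, b ^ 2 := by
              apply Finset.sum_le_sum
              intro p _
              apply Finset.sum_le_sum
              intro q _
              have h1 := abs_le.mp (hentry p q)
              exact sq_le_sq' h1.1 h1.2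
          _ = (n : ℝ) * ((C.card : ℝ) * b ^ 2) := by
              simp [Finset.sum_const, Fintype.card_coe, nsmul_eq_mul, mul_assoc]
      have h2 : frobNorm (K.submatrix id (fun q : {p // p ∈ C} => q.1) - B * P)
          ≤ Real.sqrt ((n : ℝ) * ((C.card : ℝ) * b ^ 2)) := by
        rw [frobNorm]
        exact Real.sqrt_le_sqrt hsum
      have h3 : Real.sqrt ((n : ℝ) * ((C.card : ℝ) * b ^ 2))
          = Real.sqrt ((C.card : ℝ) * n) * b := by
        rw [show (n : ℝ) * ((C.card : ℝ) * b ^ 2) = ((C.card : ℝ) * n) * b ^ 2 by ring,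
          Real.sqrt_mul (by positivity), Real.sqrt_sq hbnn]
      calc frobNorm (K.submatrix id (fun q : {p // p ∈ C} => q.1) - B * P)
          ≤ Real.sqrt ((C.card : ℝ) * n) * b := by rw [← h3]; exact h2
        _ = 4 * (κ : ℝ) * t * Real.sqrt ((C.card : ℝ) * n) * R := by rw [hb]; ring
end

section
/- Let f : ℝ^d → ℝ be Lipschitz continuous with Lipschitz constant κ (with respect to the Euclidean norm), let x_1, …, x_m ∈ ℝ^d and y_1, …, y_n ∈ ℝ^d, and define K ∈ ℝ^{m×n} by K_{i,j} = f(x_i − y_j). Suppose there is an assignment of each x_i to a center c(i) ∈ ℝ^d taking at most r distinct values and satisfying ‖x_i − c(i)‖_2 ≤ δ for all i. Then the matrix à ∈ ℝ^{m×n} defined by Ã_{i,j} = f(c(i) − y_j) has rank at most r and satisfies ‖K − Ã‖_F ≤ κ δ √(m n). -/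
open scoped NNReal

/-- If each `x i` is assigned a center `c i`, where the centers take at most `r`
distinct values and `‖x i - c i‖ ≤ δ`, then the matrix `Ã` with entries
`f (c i - y j)` has rank at most `r` and `‖K - Ã‖_F ≤ κ δ √(m n)`. -/
theorem kernel_matrix_center_approx
    (d m n r : ℕ) (κ : ℝ≥0) (f : EuclideanSpace ℝ (Fin d) → ℝ)
    (hf : LipschitzWith κ f)
    (x : Fin m → EuclideanSpace ℝ (Fin d))
    (y : Fin n → EuclideanSpace ℝ (Fin d))
    (K : Matrix (Fin m) (Fin n) ℝ)
    (hK : ∀ i j, K i j = f (x i - y j))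
    (c : Fin m → EuclideanSpace ℝ (Fin d))
    (hc : (Set.range c).ncard ≤ r)
    (δ : ℝ) (hδ : ∀ i, ‖x i - c i‖ ≤ δ) :
    (Matrix.of fun i j => f (c i - y j)).rank ≤ r ∧
    frobNorm (K - Matrix.of fun i j => f (c i - y j)) ≤
      (κ : ℝ) * δ * Real.sqrt (m * n) := by
  classical
  set A : Matrix (Fin m) (Fin n) ℝ := Matrix.of fun i j => f (c i - y j) with hA
  constructor
  · -- rank bound
    have hrt : A.rank = A.transpose.rank := (Matrix.rank_transpose A).symm
    rw [hrt, Matrix.rank_eq_finrank_span_cols]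
    show Module.finrank ℝ (Submodule.span ℝ (Set.range A)) ≤ r
    have hrange : Set.range A =
        (fun v => (fun j => f (v - y j))) '' Set.range c := by
      rw [← Set.range_comp]
      rfl
    rw [hrange]
    set S := (fun v => (fun j => f (v - y j))) '' Set.range c with hS
    have hSfin : S.Finite := ((Set.finite_range c).image _)
    haveI : Fintype S := hSfin.fintype
    have h1 := finrank_span_le_card (R := ℝ) S
    have h2 : S.toFinset.card = S.ncard := (Set.ncard_eq_toFinset_card' S).symm
    have h3 : S.ncard ≤ (Set.range c).ncard :=
      Set.ncard_image_le (Set.finite_range c)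
    exact le_trans h1 (by rw [h2]; exact le_trans h3 hc)
  · -- Frobenius bound
    rcases Nat.eq_zero_or_pos m with hm | hm
    · subst hm
      simp [frobNorm]
    rcases Nat.eq_zero_or_pos n with hn | hn
    · subst hn
      simp [frobNorm]
    have hδ0 : 0 ≤ δ := le_trans (norm_nonneg _) (hδ ⟨0, hm⟩)
    have hentry : ∀ i j, ((K - A) i j) ^ 2 ≤ ((κ : ℝ) * δ) ^ 2 := by
      intro i j
      have hb : |(K - A) i j| ≤ (κ : ℝ) * δ := by
        have : (K - A) i j = f (x i - y j) - f (c i - y j) := by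
          simp [hK, hA]
        rw [this]
        calc |f (x i - y j) - f (c i - y j)|
            = dist (f (x i - y j)) (f (c i - y j)) := (Real.dist_eq _ _).symm
          _ ≤ (κ : ℝ) * dist (x i - y j) (c i - y j) := hf.dist_le_mul _ _
          _ = (κ : ℝ) * ‖x i - c i‖ := by
              rw [dist_eq_norm]; ring_nf
              congr 1
              abel
          _ ≤ (κ : ℝ) * δ := by
              exact mul_le_mul_of_nonneg_left (hδ i) κ.coe_nonneg
      calc ((K - A) i j) ^ 2 = |(K - A) i j| ^ 2 := (sq_abs _).symm
        _ ≤ ((κ : ℝ) * δ) ^ 2 :=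
          pow_le_pow_left₀ (abs_nonneg _) hb 2
    have hsum : ∑ i, ∑ j, ((K - A) i j) ^ 2 ≤
        ((κ : ℝ) * δ) ^ 2 * (m * n) := by
      calc ∑ i, ∑ j, ((K - A) i j) ^ 2
          ≤ ∑ _i : Fin m, ∑ _j : Fin n, ((κ : ℝ) * δ) ^ 2 := by
            apply Finset.sum_le_sum; intro i _
            apply Finset.sum_le_sum; intro j _
            exact hentry i j
        _ = ((κ : ℝ) * δ) ^ 2 * (m * n) := by
            simp [Finset.sum_const]; ring
    have hκδ : 0 ≤ (κ : ℝ) * δ := mul_nonneg κ.coe_nonneg hδ0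
    calc frobNorm (K - A) ≤ Real.sqrt (((κ : ℝ) * δ) ^ 2 * (m * n)) :=
          Real.sqrt_le_sqrt hsum
      _ = (κ : ℝ) * δ * Real.sqrt (m * n) := by
          rw [Real.sqrt_mul (sq_nonneg _), Real.sqrt_sq hκδ]
end
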